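/- Let F be a finite nonempty type, let J and m be natural numbers, and let Ω = Fin J → F be the space of parameter configurations. Let G be a connected simple graph on F such that any two vertices of F are joined by a walk of length at most m. Let K be a row-stochastic matrix on Ω such that for every configuration P : Ω, every coordinate j : Fin J, and every value v : F with v = P j or G.Adj (P j) v, the one-step transition probability K P (Function.update P j v) is strictly positive. Then for all configurations P, P' : Ω, the (J·m)-step transition probability (K^(J·m)) P P' is strictly positive; in particular the Markov chain with transition matrix K is irreducible. -/
import Mathlib

section Aux

variable {Ω : Type*} [Fintype Ω] [DecidableEq Ω] (K : Matrix Ω Ω ℝ)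

lemma pow_entry_nonneg (h : ∀ s t, 0 ≤ K s t) : ∀ n s t, 0 ≤ (K ^ n) s t := by
  intro n
  induction n with
  | zero =>
      intro s t
      simp only [pow_zero, Matrix.one_apply]
      split <;> norm_num
  | succ n ih =>
      intro s t
      rw [pow_succ, Matrix.mul_apply]
      exact Finset.sum_nonneg fun u _ => mul_nonneg (ih s u) (h u t)

lemma pow_entry_trans (h : ∀ s t, 0 ≤ K s t) {a b : ℕ} {s t u : Ω}
    (h1 : 0 < (K ^ a) s t) (h2 : 0 < (K ^ b) t u) : 0 < (K ^ (a + b)) s u := by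
  rw [pow_add, Matrix.mul_apply]
  refine Finset.sum_pos'
    (fun x _ => mul_nonneg (pow_entry_nonneg K h a s x) (pow_entry_nonneg K h b x u))
    ⟨t, Finset.mem_univ t, mul_pos h1 h2⟩

lemma pow_entry_step (h : ∀ s t, 0 ≤ K s t) {a : ℕ} {s t u : Ω}
    (h1 : 0 < (K ^ a) s t) (h2 : 0 < K t u) : 0 < (K ^ (a + 1)) s u := by
  refine pow_entry_trans K h h1 ?_
  rwa [pow_one]

end Aux

/-- **Irreducibility** (paper's Theorem): if at each step the Markov chain on
parameter configurations `Ω = Fin J → F` can, with positive probability, change any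
single coordinate to any value adjacent (in a graph `G` of diameter at most `m`)
to its current value, or leave it unchanged, then every configuration is reachable
from every other in exactly `J * m` steps with positive probability. -/
theorem irreducibility_of_coordinate_corrections
    {F : Type*} [Fintype F] [Nonempty F] [DecidableEq F]
    (J m : ℕ) (G : SimpleGraph F) (hG : G.Connected)
    (hdiam : ∀ u v : F, ∃ w : G.Walk u v, w.length ≤ m)
    (K : Matrix (Fin J → F) (Fin J → F) ℝ)
    (hK_nonneg : ∀ s t, 0 ≤ K s t)
    (hK_rowsum : ∀ s, ∑ t, K s t = 1)
    (hK_pos : ∀ (P : Fin J → F) (j : Fin J) (v : F),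
      (v = P j ∨ G.Adj (P j) v) → 0 < K P (Function.update P j v)) :
    ∀ P P' : Fin J → F, 0 < (K ^ (J * m)) P P' := by
  intro P P'
  -- trivial case J = 0
  rcases Nat.eq_zero_or_pos J with hJ | hJ
  · subst hJ
    have : P = P' := funext fun i => absurd i.2 (by simp)
    subst this
    simp [pow_zero, Matrix.one_apply_eq]
  -- staying put has positive probability
  have hstay : ∀ Q : Fin J → F, 0 < K Q Q := by
    intro Q
    have := hK_pos Q ⟨0, hJ⟩ (Q ⟨0, hJ⟩) (Or.inl rfl)
    rwa [Function.update_eq_self] at this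
  have hstayn : ∀ (n : ℕ) (Q : Fin J → F), 0 < (K ^ n) Q Q := by
    intro n Q
    induction n with
    | zero => simp [pow_zero, Matrix.one_apply_eq]
    | succ n ih => exact pow_entry_step K hK_nonneg ih (hstay Q)
  -- following a walk on one coordinate
  have hwalk : ∀ {a b : F} (w : G.Walk a b) (Q : Fin J → F) (j : Fin J), Q j = a →
      0 < (K ^ w.length) Q (Function.update Q j b) := by
    intro a b w
    induction w with
    | @nil x =>
        intro Q j hQ
        have : Function.update Q j x = Q := by rw [← hQ, Function.update_eq_self]
        rw [this]
        simpa using hstayn 0 Q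
    | @cons a c b hadj w ih =>
        intro Q j hQ
        have h1 : 0 < K Q (Function.update Q j c) := hK_pos Q j c (Or.inr (hQ ▸ hadj))
        have h2 : 0 < (K ^ w.length) (Function.update Q j c)
            (Function.update (Function.update Q j c) j b) :=
          ih (Function.update Q j c) j (Function.update_self j c Q)
        rw [Function.update_idem] at h2
        have := pow_entry_trans K hK_nonneg (a := 1) (by rwa [pow_one]) h2
        simpa only [SimpleGraph.Walk.length_cons, Nat.add_comm] using this
  -- change one coordinate in exactly m steps
  have hcoord : ∀ (Q : Fin J → F) (j : Fin J) (v : F),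
      0 < (K ^ m) Q (Function.update Q j v) := by
    intro Q j v
    obtain ⟨w, hw⟩ := hdiam (Q j) v
    have h1 := hwalk w Q j rfl
    have h2 := hstayn (m - w.length) (Function.update Q j v)
    have := pow_entry_trans K hK_nonneg h1 h2
    rwa [Nat.add_sub_cancel' hw] at this
  -- fix coordinates one at a time
  let Q : ℕ → (Fin J → F) := fun k i => if (i : ℕ) < k then P' i else P i
  have hmain : ∀ k ≤ J, 0 < (K ^ (k * m)) P (Q k) := by
    intro k hk
    induction k with
    | zero =>
        have : Q 0 = P := funext fun i => by simp [Q]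
        rw [this]
        simpa using hstayn 0 P
    | succ k ih =>
        have hk' : k < J := hk
        have h1 := ih (le_of_lt hk')
        have h2 := hcoord (Q k) ⟨k, hk'⟩ (P' ⟨k, hk'⟩)
        have hQ : Function.update (Q k) ⟨k, hk'⟩ (P' ⟨k, hk'⟩) = Q (k + 1) := by
          funext i
          rcases eq_or_ne i ⟨k, hk'⟩ with h | h
          · subst h; simp [Q]
          · have hik : (i : ℕ) ≠ k := fun hc => h (Fin.ext hc)
            simp only [Function.update_of_ne h, Q]
            by_cases hlt : (i : ℕ) < k
            · simp [hlt, Nat.lt_succ_of_lt hlt]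
            · have : ¬ (i : ℕ) < k + 1 := by omega
              simp [hlt, this]
        rw [hQ] at h2
        have := pow_entry_trans K hK_nonneg h1 h2
        rwa [← Nat.succ_mul] at this
  have hQJ : Q J = P' := funext fun i => by simp [Q, i.2]
  have := hmain J le_rfl
  rwa [hQJ] at this
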